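/- Under the standing assumptions, the map y ↦ (h(y)λ(y) + δ)/h'(y) is strictly increasing on (-∞, y₀]. Consequently, for y ≤ y_b ≤ y₀, one has (h(y)λ(y) + δ)/h'(y) ≤ (h(y_b)λ(y_b) + δ)/h'(y_b), which yields h(y)λ(y) + h'(y) + δ - (h'(y)/h'(y_b))·(h(y_b)λ(y_b) + h'(y_b) + δ) ≤ 0. -/

import Mathlib

open Real

/-- The map `y ↦ (hλ+δ)/h'` is strictly increasing on `(-∞, y₀]`; hence for
`y ≤ y_b ≤ y₀` the key buy-region inequality
`hλ(y)+h'(y)+δ - (h'(y)/h'(y_b))(hλ(y_b)+h'(y_b)+δ) ≤ 0` holds. -/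
theorem stmt13 (h lam : ℝ → ℝ) (δ y₀ : ℝ)
    (hC2 : ContDiff ℝ 2 h) (hh0 : h 0 = 0)
    (hh' : ∀ y, 0 < deriv h y)
    (hh'' : ∀ y, 0 ≤ deriv (deriv h) y)
    (hlamC1 : ContDiff ℝ 1 lam) (hlampos : ∀ y, 0 < lam y)
    (hhlam' : ∀ y, 0 < deriv (fun z => h z * lam z) y)
    (hδ : 0 < δ)
    (hy₀lt : y₀ < 0)
    (hy₀ : h y₀ * lam y₀ + δ = 0) :
    StrictMonoOn (fun y => (h y * lam y + δ) / deriv h y) (Set.Iic y₀) ∧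
    ∀ y yb : ℝ, y ≤ yb → yb ≤ y₀ →
      (h y * lam y + δ) / deriv h y ≤ (h yb * lam yb + δ) / deriv h yb ∧
      h y * lam y + deriv h y + δ
        - (deriv h y / deriv h yb) * (h yb * lam yb + deriv h yb + δ) ≤ 0 := by
  -- N = h*lam + δ is strictly increasing
  have hNdiff : Differentiable ℝ (fun z => h z * lam z + δ) :=
    ((hC2.differentiable (by norm_num)).mul (hlamC1.differentiable one_ne_zero)).add_const δ
  have hNmono : StrictMono (fun z => h z * lam z + δ) := by
    apply strictMono_of_deriv_pos
    intro y
    have : deriv (fun z => h z * lam z + δ) y = deriv (fun z => h z * lam z) y := by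
      simp [deriv_add_const]
    rw [this]; exact hhlam' y
  -- deriv h is monotone
  have hDdiff : Differentiable ℝ (deriv h) := by
    have h2 : ContDiff ℝ (1 + 1) h := by norm_num at hC2 ⊢; exact hC2
    rw [contDiff_succ_iff_deriv] at h2
    exact h2.2.2.differentiable one_ne_zero
  have hDmono : Monotone (deriv h) :=
    monotone_of_deriv_nonneg hDdiff hh''
  -- N ≤ 0 on Iic y₀
  have hNle : ∀ y ≤ y₀, h y * lam y + δ ≤ 0 := fun y hy => by
    calc h y * lam y + δ ≤ h y₀ * lam y₀ + δ := hNmono.monotone hy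
    _ = 0 := hy₀
  -- key: ratio comparison
  have key : ∀ y yb : ℝ, y ≤ yb → yb ≤ y₀ →
      (h y * lam y + δ) / deriv h y ≤ (h yb * lam yb + δ) / deriv h yb := by
    intro y yb hyy hyb
    have hNy : h y * lam y + δ ≤ 0 := hNle y (hyy.trans hyb)
    have hNb : h y * lam y + δ ≤ h yb * lam yb + δ := hNmono.monotone hyy
    have hD : deriv h y ≤ deriv h yb := hDmono hyy
    rw [div_le_div_iff₀ (hh' y) (hh' yb)]
    nlinarith [hh' y, hh' yb]
  constructor
  · intro a ha b hb hab
    have hNa : h a * lam a + δ < h b * lam b + δ := hNmono hab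
    have hNa0 : h a * lam a + δ ≤ 0 := hNle a ha
    rw [div_lt_div_iff₀ (hh' a) (hh' b)]
    have hD : deriv h a ≤ deriv h b := hDmono hab.le
    nlinarith [hh' a, hh' b]
  · intro y yb hyy hyb
    refine ⟨key y yb hyy hyb, ?_⟩
    have hk := key y yb hyy hyb
    have hDy := hh' y
    have hDb := hh' yb
    rw [div_le_div_iff₀ hDy hDb] at hk
    rw [div_mul_eq_mul_div, sub_nonpos, le_div_iff₀ hDb]
    nlinarith
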